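/- Let n ≥ 4 and let a_1, …, a_{n−3} be pairwise distinct complex numbers, each different from 0 and from 1. For s = (s_1,…,s_{n−2}) ∈ ℂ^{n−2} define the following n lines in ℙ²(ℂ): l_i(s) = {x1 − a_i·x2 + s_i·x0 = 0} for 1 ≤ i ≤ n−3; l_{n−2}(s) = {s_{n−2}·x0 + x1 = 0}; l_{n−1} = {x2 = 0}; l_n = {x1 − x2 = 0}; and let l_A = {x0 = 0}. Then for s, s' ∈ ℂ^{n−2}, there exists g ∈ SL(3,ℂ) whose induced action on ℙ²(ℂ) maps l_A to l_A and maps l_i(s) to l_i(s') for every i = 1, …, n, if and only if there exists λ ∈ ℂ ∖ {0} with s' = λ·s. -/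

import Mathlib

noncomputable section

/-- The complex projective plane `ℙ²(ℂ)`. -/
abbrev P2 : Type := Projectivization ℂ (Fin 3 → ℂ)

/-- The group `SL(3,ℂ)`. -/
abbrev SL3 : Type := Matrix.SpecialLinearGroup (Fin 3) ℂ

/-- The induced action of `g ∈ SL(3,ℂ)` on `ℙ²(ℂ)`, via the linear action of `g`
on column vectors `(x0,x1,x2)ᵀ`. -/
def act (g : SL3) : P2 → P2 :=
  Projectivization.map (Matrix.SpecialLinearGroup.toLin' g).toLinearMap
    (Matrix.SpecialLinearGroup.toLin' g).injective

/-- The line `{[x0:x1:x2] ∈ ℙ²(ℂ) : b0·x0 + b1·x1 + b2·x2 = 0}` determined by the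
linear form with coefficients `b`. -/
def lineSet (b : Fin 3 → ℂ) : Set P2 :=
  {p : P2 | b 0 * p.rep 0 + b 1 * p.rep 1 + b 2 * p.rep 2 = 0}

/-- The line `l_A = {x0 = 0}`. -/
def lA : Set P2 := lineSet ![1, 0, 0]

open Matrix Projectivization

lemma mem_lineSet (b : Fin 3 → ℂ) (p : P2) : p ∈ lineSet b ↔ b ⬝ᵥ p.rep = 0 := by
  simp [lineSet, dotProduct, Fin.sum_univ_three]

lemma mk_mem_lineSet (b : Fin 3 → ℂ) (v : Fin 3 → ℂ) (hv : v ≠ 0) :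
    Projectivization.mk ℂ v hv ∈ lineSet b ↔ b ⬝ᵥ v = 0 := by
  obtain ⟨t, ht⟩ := Projectivization.exists_smul_eq_mk_rep ℂ v hv
  rw [mem_lineSet, ← ht]
  rw [dotProduct_smul]
  exact smul_eq_zero_iff_eq t

lemma act_mk (g : SL3) (v : Fin 3 → ℂ) (hv : v ≠ 0) :
    act g (Projectivization.mk ℂ v hv) =
      Projectivization.mk ℂ ((g : Matrix (Fin 3) (Fin 3) ℂ) *ᵥ v)
        (by
          intro h
          apply hv
          have := (Matrix.SpecialLinearGroup.toLin' g).injective (a₁ := v) (a₂ := 0)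
          simp only [map_zero] at this
          apply this
          rw [Matrix.SpecialLinearGroup.toLin'_apply, Matrix.toLin'_apply, h]) := by
  rw [act, Projectivization.map_mk]
  congr 1

lemma act_mem_lineSet (g : SL3) (c : Fin 3 → ℂ) (p : P2) :
    act g p ∈ lineSet c ↔ p ∈ lineSet (c ᵥ* (g : Matrix (Fin 3) (Fin 3) ℂ)) := by
  conv_lhs => rw [← p.mk_rep]
  rw [act_mk, mk_mem_lineSet, mem_lineSet, Matrix.dotProduct_mulVec]

lemma act_injective (g : SL3) : Function.Injective (act g) :=
  Projectivization.map_injective _ (Matrix.SpecialLinearGroup.toLin' g).injective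

lemma act_surjective (g : SL3) : Function.Surjective (act g) := by
  intro q
  refine ⟨Projectivization.mk ℂ (((g⁻¹ : SL3) : Matrix (Fin 3) (Fin 3) ℂ) *ᵥ q.rep) ?_, ?_⟩
  · intro h
    apply q.rep_nonzero
    have : (g : Matrix (Fin 3) (Fin 3) ℂ) *ᵥ (((g⁻¹ : SL3) : Matrix (Fin 3) (Fin 3) ℂ) *ᵥ q.rep)
        = q.rep := by
      rw [Matrix.mulVec_mulVec, ← Matrix.SpecialLinearGroup.coe_mul, mul_inv_cancel]
      simp
    rw [h] at this
    simpa using this.symm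
  · rw [act_mk]
    conv_rhs => rw [← q.mk_rep]
    congr 1
    rw [Matrix.mulVec_mulVec, ← Matrix.SpecialLinearGroup.coe_mul, mul_inv_cancel]
    simp

lemma image_lineSet_iff (g : SL3) (b c : Fin 3 → ℂ) :
    act g '' lineSet b = lineSet c ↔
      lineSet b = lineSet (c ᵥ* (g : Matrix (Fin 3) (Fin 3) ℂ)) := by
  have hpre : act g ⁻¹' lineSet c = lineSet (c ᵥ* (g : Matrix (Fin 3) (Fin 3) ℂ)) :=
    Set.ext fun p => act_mem_lineSet g c p
  constructor
  · intro h
    rw [← hpre, ← h, Set.preimage_image_eq _ (act_injective g)]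
  · intro h
    rw [h, ← hpre, Set.image_preimage_eq _ (act_surjective g)]

lemma lineSet_prop {b b' : Fin 3 → ℂ} (hb : b ≠ 0) (hb' : b' ≠ 0)
    (h : lineSet b = lineSet b') : ∃ μ : ℂ, μ ≠ 0 ∧ b' = μ • b := by
  have key : ∀ v : Fin 3 → ℂ, v ≠ 0 → (b ⬝ᵥ v = 0 ↔ b' ⬝ᵥ v = 0) := by
    intro v hv
    have := Set.ext_iff.mp h (Projectivization.mk ℂ v hv)
    rwa [mk_mem_lineSet, mk_mem_lineSet] at this
  obtain ⟨k, hk⟩ : ∃ k, b k ≠ 0 := by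
    by_contra hc
    push_neg at hc
    exact hb (funext hc)
  have step : ∀ j, j ≠ k → b' j * b k = b' k * b j := by
    intro j hj
    have hvne : (b k • (Pi.single j 1 : Fin 3 → ℂ) - b j • (Pi.single k 1 : Fin 3 → ℂ)) ≠ 0 := by
      intro h0
      have := congrFun h0 j
      simp [Pi.single_apply, hj, hj.symm] at this
      exact hk this
    have hbv : b ⬝ᵥ (b k • (Pi.single j 1 : Fin 3 → ℂ) - b j • (Pi.single k 1 : Fin 3 → ℂ)) = 0 := by
      simp [dotProduct_sub, dotProduct_smul]
      ring
    have := (key _ hvne).mp hbv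
    simp [dotProduct_sub, dotProduct_smul] at this
    linear_combination this
  have hb'k : b' k ≠ 0 := by
    intro h0
    apply hb'
    funext j
    by_cases hj : j = k
    · rw [hj, h0]; rfl
    · have := step j hj
      rw [h0] at this
      simp at this
      rcases this with h1 | h2
      · exact h1
      · exact absurd h2 hk
  refine ⟨b' k / b k, div_ne_zero hb'k hk, ?_⟩
  funext j
  by_cases hj : j = k
  · subst hj; rw [Pi.smul_apply, smul_eq_mul]; field_simp
  · have := step j hj
    rw [Pi.smul_apply, smul_eq_mul]
    field_simp
    linear_combination this

lemma lineSet_smul {μ : ℂ} (hμ : μ ≠ 0) (b : Fin 3 → ℂ) : lineSet (μ • b) = lineSet b := by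
  ext p
  rw [mem_lineSet, mem_lineSet, smul_dotProduct, smul_eq_mul, mul_eq_zero]
  simp [hμ]

lemma image_of_vecMul_eq (g : SL3) {b c : Fin 3 → ℂ} {μ : ℂ} (hμ : μ ≠ 0)
    (h : c ᵥ* (g : Matrix (Fin 3) (Fin 3) ℂ) = μ • b) :
    act g '' lineSet b = lineSet c := by
  rw [image_lineSet_iff, h, lineSet_smul hμ]

lemma image_prop (g : SL3) {b c : Fin 3 → ℂ} (hb : b ≠ 0) (hc : c ≠ 0)
    (h : act g '' lineSet b = lineSet c) :
    ∃ μ : ℂ, μ ≠ 0 ∧ c ᵥ* (g : Matrix (Fin 3) (Fin 3) ℂ) = μ • b := by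
  have hcg : c ᵥ* (g : Matrix (Fin 3) (Fin 3) ℂ) ≠ 0 := by
    intro h0
    apply hc
    have : c ᵥ* ((g : Matrix (Fin 3) (Fin 3) ℂ) * ((g⁻¹ : SL3) : Matrix (Fin 3) (Fin 3) ℂ)) = 0 := by
      rw [← Matrix.vecMul_vecMul, h0, Matrix.zero_vecMul]
    rwa [← Matrix.SpecialLinearGroup.coe_mul, mul_inv_cancel, Matrix.SpecialLinearGroup.coe_one,
      Matrix.vecMul_one] at this
  obtain ⟨μ, hμ, he⟩ := lineSet_prop hb hcg ((image_lineSet_iff g b c).mp h)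
  exact ⟨μ, hμ, he⟩

lemma vec_ne0 (x y : ℂ) : (![x, 1, y] : Fin 3 → ℂ) ≠ 0 := by
  intro h; simpa using congrFun h 1


/-- let `n ≥ 4` and let `a_1, …, a_{n−3}` be pairwise distinct complex
numbers, each different from `0` and `1`.  For `s ∈ ℂ^{n−2}` consider the lines
`l_i(s) = {x1 − a_i·x2 + s_i·x0 = 0}` (`1 ≤ i ≤ n−3`),
`l_{n−2}(s) = {s_{n−2}·x0 + x1 = 0}`, `l_{n−1} = {x2 = 0}`, `l_n = {x1 − x2 = 0}`,
and `l_A = {x0 = 0}`.  Then some `g ∈ SL(3,ℂ)` maps `l_A` to `l_A` and `l_i(s)` to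
`l_i(s')` for every `i = 1, …, n`, iff `s' = λ·s` for some `λ ∈ ℂ ∖ {0}`. -/
theorem stmt10 (n : ℕ) (hn : 4 ≤ n)
    (a : Fin (n - 3) → ℂ) (ha : Function.Injective a)
    (ha0 : ∀ i, a i ≠ 0) (ha1 : ∀ i, a i ≠ 1)
    (s s' : Fin (n - 2) → ℂ) :
    (∃ g : SL3,
      act g '' lA = lA ∧
      (∀ i : Fin (n - 3),
        act g '' lineSet ![s (Fin.castLE (by omega) i), 1, -(a i)] =
          lineSet ![s' (Fin.castLE (by omega) i), 1, -(a i)]) ∧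
      act g '' lineSet ![s ⟨n - 3, by omega⟩, 1, 0] =
        lineSet ![s' ⟨n - 3, by omega⟩, 1, 0] ∧
      act g '' lineSet ![0, 0, 1] = lineSet ![0, 0, 1] ∧
      act g '' lineSet ![0, 1, -1] = lineSet ![0, 1, -1]) ↔
    ∃ lam : ℂ, lam ≠ 0 ∧ ∀ j, s' j = lam * s j := by
  constructor
  · rintro ⟨g, hA, hi, hlast, h3, h4⟩
    obtain ⟨α, hα, eA⟩ := image_prop g (b := ![1,0,0]) (c := ![1,0,0])
      (by intro h; simpa using congrFun h 0) (by intro h; simpa using congrFun h 0) hA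
    obtain ⟨γ, hγ, e3⟩ := image_prop g (b := ![0,0,1]) (c := ![0,0,1])
      (by intro h; simpa using congrFun h 2) (by intro h; simpa using congrFun h 2) h3
    obtain ⟨δ, hδ, e4⟩ := image_prop g (b := ![0,1,-1]) (c := ![0,1,-1])
      (vec_ne0 0 (-1)) (vec_ne0 0 (-1)) h4
    have hG00 : (g : Matrix (Fin 3) (Fin 3) ℂ) 0 0 = α := by
      have := congrFun eA 0
      simpa [Matrix.vecMul, dotProduct, Fin.sum_univ_three] using this
    have hG01 : (g : Matrix (Fin 3) (Fin 3) ℂ) 0 1 = 0 := by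
      have := congrFun eA 1
      simpa [Matrix.vecMul, dotProduct, Fin.sum_univ_three] using this
    have hG20 : (g : Matrix (Fin 3) (Fin 3) ℂ) 2 0 = 0 := by
      have := congrFun e3 0
      simpa [Matrix.vecMul, dotProduct, Fin.sum_univ_three] using this
    have hG21 : (g : Matrix (Fin 3) (Fin 3) ℂ) 2 1 = 0 := by
      have := congrFun e3 1
      simpa [Matrix.vecMul, dotProduct, Fin.sum_univ_three] using this
    have hG10 : (g : Matrix (Fin 3) (Fin 3) ℂ) 1 0 = 0 := by
      have := congrFun e4 0
      simpa [Matrix.vecMul, dotProduct, Fin.sum_univ_three, hG20] using this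
    have hG11 : (g : Matrix (Fin 3) (Fin 3) ℂ) 1 1 = δ := by
      have := congrFun e4 1
      simpa [Matrix.vecMul, dotProduct, Fin.sum_univ_three, hG21] using this
    have key : ∀ i : Fin (n - 3),
        s' (Fin.castLE (by omega) i) * α = δ * s (Fin.castLE (by omega) i) := by
      intro i
      obtain ⟨μ, hμ, e⟩ := image_prop g (vec_ne0 _ _) (vec_ne0 _ _) (hi i)
      have e1 := congrFun e 1
      simp [Matrix.vecMul, dotProduct, Fin.sum_univ_three, hG01, hG11, hG21] at e1
      have e0 := congrFun e 0
      simp [Matrix.vecMul, dotProduct, Fin.sum_univ_three, hG00, hG10, hG20] at e0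
      rw [← e1] at e0
      exact e0
    have keyL : s' ⟨n - 3, by omega⟩ * α = δ * s ⟨n - 3, by omega⟩ := by
      obtain ⟨μ, hμ, e⟩ := image_prop g (vec_ne0 _ _) (vec_ne0 _ _) hlast
      have e1 := congrFun e 1
      simp [Matrix.vecMul, dotProduct, Fin.sum_univ_three, hG01, hG11, hG21] at e1
      have e0 := congrFun e 0
      simp [Matrix.vecMul, dotProduct, Fin.sum_univ_three, hG00, hG10, hG20] at e0
      rw [← e1] at e0
      exact e0
    refine ⟨δ * α⁻¹, mul_ne_zero hδ (inv_ne_zero hα), ?_⟩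
    intro j
    by_cases hj : (j : ℕ) < n - 3
    · have hkey := key ⟨(j : ℕ), hj⟩
      have hcast : Fin.castLE (by omega) (⟨(j : ℕ), hj⟩ : Fin (n - 3)) = j := by
        ext; rfl
      rw [hcast] at hkey
      field_simp
      linear_combination hkey
    · have hj' : j = ⟨n - 3, by omega⟩ := by
        apply Fin.ext
        simp only [Fin.val_mk]
        have h2 := j.isLt
        omega
      rw [hj']
      field_simp
      linear_combination keyL
  · rintro ⟨lam, hlam, hs⟩
    obtain ⟨d, hd⟩ := IsAlgClosed.exists_pow_nat_eq lam (n := 3) (by norm_num)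
    have hd0 : d ≠ 0 := by
      intro h; rw [h] at hd; simp at hd; exact hlam hd.symm
    refine ⟨⟨Matrix.diagonal ![d / lam, d, d], ?_⟩, ?_, ?_, ?_, ?_, ?_⟩
    · simp [Matrix.det_diagonal, Fin.prod_univ_three]
      field_simp
      linear_combination hd
    · exact image_of_vecMul_eq _ (μ := d / lam) (div_ne_zero hd0 hlam)
        (by funext j; fin_cases j <;> simp [Matrix.vecMul_diagonal])
    · intro i
      refine image_of_vecMul_eq _ (μ := d) hd0 ?_
      funext j
      fin_cases j
      · simp [Matrix.vecMul_diagonal, hs]; field_simp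
      · simp [Matrix.vecMul_diagonal]
      · simp [Matrix.vecMul_diagonal]; ring
    · refine image_of_vecMul_eq _ (μ := d) hd0 ?_
      funext j
      fin_cases j
      · simp [Matrix.vecMul_diagonal, hs]; field_simp
      · simp [Matrix.vecMul_diagonal]
      · simp [Matrix.vecMul_diagonal]
    · exact image_of_vecMul_eq _ (μ := d) hd0
        (by funext j; fin_cases j <;> simp [Matrix.vecMul_diagonal])
    · exact image_of_vecMul_eq _ (μ := d) hd0
        (by funext j; fin_cases j <;> simp [Matrix.vecMul_diagonal])
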